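/- Let $h, m$ be positive integers, let $P, P_1$ be $h\times h$ complex matrices and $\tilde{B}_1$ an $h\times m$ complex matrix. If the controllable subspace of $(P, P_1, \tilde{B}_1)$ is all of $\mathbb{C}^h$, then for every pair $s, s_1 \in \mathbb{C}$ the $h \times (2h + m)$ block matrix $\begin{pmatrix} sI_h - P & s_1 I_h - P_1 & \tilde{B}_1 \end{pmatrix}$ has rank $h$. -/

import Mathlib

/-- The controllable subspace of `(P, P₁, B)`: the span of the columns of all matrices
`W * B`, where `W` ranges over all finite products (words) of factors from `{P, P₁}`,
including the empty product `W = I`. -/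
noncomputable def ctrlSubspace {h m : ℕ} (P P₁ : Matrix (Fin h) (Fin h) ℂ)
    (B : Matrix (Fin h) (Fin m) ℂ) : Submodule ℂ (Fin h → ℂ) :=
  Submodule.span ℂ
    {v | ∃ L : List (Matrix (Fin h) (Fin h) ℂ),
      (∀ M ∈ L, M = P ∨ M = P₁) ∧ ∃ j : Fin m, v = fun i => (L.prod * B) i j}

lemma col_mul_eq_mulVec {h k m : ℕ} (M : Matrix (Fin h) (Fin k) ℂ)
    (N : Matrix (Fin k) (Fin m) ℂ) (j : Fin m) :
    (fun i => (M * N) i j) = M.mulVec (fun i => N i j) := by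
  funext i
  simp [Matrix.mul_apply, Matrix.mulVec, dotProduct]

/-- **PBH rank condition from exact controllability.**
If the controllable subspace of `(P, P₁, B̃₁)` is all of `ℂ^h`, then for every
`s, s₁ ∈ ℂ` the block matrix `(sI - P  s₁I - P₁  B̃₁)` has rank `h`. -/
theorem pbh_rank_of_controllable (h m : ℕ) (hh : 0 < h) (hm : 0 < m)
    (P P₁ : Matrix (Fin h) (Fin h) ℂ) (Btilde₁ : Matrix (Fin h) (Fin m) ℂ)
    (hctrl : ctrlSubspace P P₁ Btilde₁ = ⊤) :
    ∀ s s₁ : ℂ,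
      (Matrix.fromCols (s • (1 : Matrix (Fin h) (Fin h) ℂ) - P)
        (Matrix.fromCols (s₁ • (1 : Matrix (Fin h) (Fin h) ℂ) - P₁) Btilde₁)).rank
        = h := by
  intro s s₁
  set A₀ := s • (1 : Matrix (Fin h) (Fin h) ℂ) - P with hA₀
  set A₁ := s₁ • (1 : Matrix (Fin h) (Fin h) ℂ) - P₁ with hA₁
  set M := Matrix.fromCols A₀ (Matrix.fromCols A₁ Btilde₁) with hM
  set S := LinearMap.range M.mulVecLin with hS
  -- each block's mulVec lands in S
  have hblock : ∀ (x : Fin h → ℂ) (y : Fin h → ℂ) (z : Fin m → ℂ),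
      A₀.mulVec x + (A₁.mulVec y + Btilde₁.mulVec z) ∈ S := by
    intro x y z
    refine ⟨Sum.elim x (Sum.elim y z), ?_⟩
    simp [hM, Matrix.mulVecLin_apply, Matrix.fromCols_mulVec_sumElim]
  have hA0mem : ∀ x, A₀.mulVec x ∈ S := by
    intro x
    have := hblock x 0 0
    simpa using this
  have hA1mem : ∀ y, A₁.mulVec y ∈ S := by
    intro y
    have := hblock 0 y 0
    simpa using this
  have hBmem : ∀ z, Btilde₁.mulVec z ∈ S := by
    intro z
    have := hblock 0 0 z
    simpa using this
  -- invariance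
  have hPinv : ∀ v ∈ S, P.mulVec v ∈ S := by
    intro v hv
    have hPv : P.mulVec v = s • v - A₀.mulVec v := by
      rw [hA₀, Matrix.sub_mulVec]
      simp [Matrix.smul_mulVec]
    rw [hPv]
    exact Submodule.sub_mem S (Submodule.smul_mem S s hv) (hA0mem v)
  have hP1inv : ∀ v ∈ S, P₁.mulVec v ∈ S := by
    intro v hv
    have hPv : P₁.mulVec v = s₁ • v - A₁.mulVec v := by
      rw [hA₁, Matrix.sub_mulVec]
      simp [Matrix.smul_mulVec]
    rw [hPv]
    exact Submodule.sub_mem S (Submodule.smul_mem S s₁ hv) (hA1mem v)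
  -- columns of words times B
  have hword : ∀ (L : List (Matrix (Fin h) (Fin h) ℂ)),
      (∀ W ∈ L, W = P ∨ W = P₁) → ∀ j : Fin m,
      (fun i => (L.prod * Btilde₁) i j) ∈ S := by
    intro L
    induction L with
    | nil =>
      intro _ j
      have : (fun i => ((1 : Matrix (Fin h) (Fin h) ℂ) * Btilde₁) i j)
          = Btilde₁.mulVec (Pi.single j 1) := by
        funext i
        simp [Matrix.mulVec, dotProduct, Pi.single_apply, Matrix.one_mul]
      rw [List.prod_nil, this]
      exact hBmem (Pi.single j 1)
    | cons W L ih =>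
      intro hL j
      have hmem : (fun i => (L.prod * Btilde₁) i j) ∈ S :=
        ih (fun W' hW' => hL W' (List.mem_cons_of_mem _ hW')) j
      have : (fun i => ((W :: L).prod * Btilde₁) i j)
          = W.mulVec (fun i => (L.prod * Btilde₁) i j) := by
        rw [List.prod_cons, Matrix.mul_assoc]
        exact col_mul_eq_mulVec W (L.prod * Btilde₁) j
      rw [this]
      rcases hL W (List.mem_cons_self) with rfl | rfl
      · exact hPinv _ hmem
      · exact hP1inv _ hmem
  -- span ≤ S, hence S = ⊤
  have hle : ctrlSubspace P P₁ Btilde₁ ≤ S := by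
    rw [ctrlSubspace, Submodule.span_le]
    rintro v ⟨L, hL, j, rfl⟩
    exact hword L hL j
  have hStop : S = ⊤ := top_unique (hctrl ▸ hle)
  rw [Matrix.rank, ← hS, hStop, finrank_top]
  simp
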